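/- Fix α ∈ (0, 1) and define y : ℝ → ℝ by y(x) = x^α · sin(x) for x ≥ 0 and y(x) = (-x)^α · sin(-x) for x < 0 (equivalently y(x) = |x|^α · sin|x|). Then: (i) y is continuously differentiable on ℝ with y(0) = y'(0) = 0; (ii) for every x ≠ 0, y''(x) - (2α/x)·y'(x) + (1 + (α² + α)/x²)·y(x) = 0; (iii) y is not identically zero on any interval [-δ, δ] with δ > 0. -/

import Mathlib

open Filter Topology

/-- Example 4 (Pan–Wang): for `α ∈ (0,1)`, the function `y(x) = |x|^α sin|x|` is `C¹`
on `ℝ`, satisfies `y(0) = y'(0) = 0`, solves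
`y'' - (2α/x) y' + (1 + (α² + α)/x²) y = 0` for all `x ≠ 0`, and is not
identically zero on any interval `[-δ, δ]`. -/
theorem example_not_smooth
    (α : ℝ) (hα : α ∈ Set.Ioo (0 : ℝ) 1)
    (y : ℝ → ℝ) (hy : ∀ x : ℝ, y x = |x| ^ α * Real.sin |x|) :
    ContDiff ℝ 1 y ∧ y 0 = 0 ∧ deriv y 0 = 0 ∧
    (∀ x : ℝ, x ≠ 0 →
      deriv (deriv y) x - (2 * α / x) * deriv y x + (1 + (α ^ 2 + α) / x ^ 2) * y x = 0) ∧
    (∀ δ > (0 : ℝ), ∃ x ∈ Set.Icc (-δ) δ, y x ≠ 0) := by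
  obtain ⟨hα0, hα1⟩ := hα
  set g : ℝ → ℝ := fun x => |x| ^ (α - 1) * (α * Real.sin x + x * Real.cos x) with hg_def
  -- y(0) = 0
  have hy0 : y 0 = 0 := by
    rw [hy 0]; simp [Real.zero_rpow hα0.ne']
  -- the derivative everywhere
  have key : ∀ x : ℝ, HasDerivAt y (g x) x := by
    intro x
    rcases lt_trichotomy x 0 with hx | hx | hx
    · -- x < 0
      have hne : (-x : ℝ) ≠ 0 := neg_ne_zero.2 hx.ne
      have h1 : HasDerivAt (fun t : ℝ => (-t) ^ α) ((-1) * α * (-x) ^ (α - 1)) x :=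
        (hasDerivAt_neg x).rpow_const (Or.inl hne)
      have h2 : HasDerivAt (fun t : ℝ => Real.sin (-t)) (Real.cos (-x) * (-1)) x :=
        (hasDerivAt_neg x).sin
      have h3 := h1.mul h2
      have heq : y =ᶠ[𝓝 x] fun t => (-t) ^ α * Real.sin (-t) := by
        filter_upwards [Iio_mem_nhds hx] with t ht
        rw [hy t, abs_of_neg (Set.mem_Iio.mp ht)]
      have h4 := h3.congr_of_eventuallyEq heq
      refine h4.congr_deriv ?_
      have hpow : (-x : ℝ) ^ α = (-x) ^ (α - 1) * (-x) := by
        rw [← Real.rpow_add_one hne]; congr 1; ring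
      rw [hg_def]
      simp only [abs_of_neg hx, Real.sin_neg, Real.cos_neg, hpow]
      ring
    · -- x = 0
      subst hx
      have hg0 : g 0 = 0 := by simp [hg_def]
      rw [hg0, hasDerivAt_iff_tendsto_slope]
      have hb : Tendsto (fun t : ℝ => |t| ^ α) (𝓝[≠] (0 : ℝ)) (𝓝 0) := by
        have hc : ContinuousAt (fun t : ℝ => |t| ^ α) 0 :=
          (Real.continuousAt_rpow_const _ _ (Or.inr hα0.le)).comp continuous_abs.continuousAt
        have := hc.tendsto
        simp only [abs_zero, Real.zero_rpow hα0.ne'] at this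
        exact this.mono_left nhdsWithin_le_nhds
      apply squeeze_zero_norm' ?_ hb
      filter_upwards [self_mem_nhdsWithin] with t ht
      have ht0 : (t : ℝ) ≠ 0 := ht
      rw [slope_def_field, hy0, hy t, sub_zero, sub_zero]
      have h1 : abs (Real.sin |t|) ≤ |t| := by
        simpa using Real.abs_sin_le_abs (x := |t|)
      have h2 : (0 : ℝ) ≤ |t| ^ α := Real.rpow_nonneg (abs_nonneg t) α
      have habs : (0:ℝ) < |t| := abs_pos.2 ht0
      calc ‖|t| ^ α * Real.sin |t| / t‖ = |t| ^ α * abs (Real.sin |t|) / |t| := by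
            rw [Real.norm_eq_abs, abs_div, abs_mul, abs_of_nonneg h2]
        _ ≤ |t| ^ α * |t| / |t| := by gcongr
        _ = |t| ^ α := by field_simp
    · -- x > 0
      have hne : (x : ℝ) ≠ 0 := hx.ne'
      have h1 : HasDerivAt (fun t : ℝ => t ^ α) (α * x ^ (α - 1)) x := by
        simpa using Real.hasDerivAt_rpow_const (x := x) (p := α) (Or.inl hne)
      have h3 := h1.mul (Real.hasDerivAt_sin x)
      have heq : y =ᶠ[𝓝 x] fun t => t ^ α * Real.sin t := by
        filter_upwards [Ioi_mem_nhds hx] with t ht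
        rw [hy t, abs_of_pos (Set.mem_Ioi.mp ht)]
      have h4 := h3.congr_of_eventuallyEq heq
      refine h4.congr_deriv ?_
      have hpow : (x : ℝ) ^ α = x ^ (α - 1) * x := by
        rw [← Real.rpow_add_one hne]; congr 1; ring
      rw [hg_def]
      simp only [abs_of_pos hx, hpow]
      ring
  have hderiv : deriv y = g := funext fun x => (key x).deriv
  -- continuity of g
  have hgcont : Continuous g := by
    rw [continuous_iff_continuousAt]
    intro x
    rcases eq_or_ne x 0 with rfl | hx
    · have hg0 : g 0 = 0 := by simp [hg_def]
      rw [ContinuousAt, hg0]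
      have hb : Tendsto (fun t : ℝ => (α + 1) * |t| ^ α) (𝓝 (0 : ℝ)) (𝓝 0) := by
        have hc : ContinuousAt (fun t : ℝ => |t| ^ α) 0 :=
          (Real.continuousAt_rpow_const _ _ (Or.inr hα0.le)).comp continuous_abs.continuousAt
        have := (hc.tendsto).const_mul (α + 1)
        simpa [abs_zero, Real.zero_rpow hα0.ne'] using this
      apply squeeze_zero_norm ?_ hb
      intro t
      rcases eq_or_ne t 0 with rfl | ht
      · simp [hg_def]
        positivity
      · have h2 : (0 : ℝ) ≤ |t| ^ (α - 1) := Real.rpow_nonneg (abs_nonneg t) _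
        have hbb : |α * Real.sin t + t * Real.cos t| ≤ (α + 1) * |t| := by
          have hs : |Real.sin t| ≤ |t| := Real.abs_sin_le_abs
          have hc : |Real.cos t| ≤ 1 := Real.abs_cos_le_one t
          calc |α * Real.sin t + t * Real.cos t| ≤ |α * Real.sin t| + |t * Real.cos t| :=
                abs_add_le _ _
            _ ≤ (α + 1) * |t| := by
                rw [abs_mul, abs_mul, abs_of_pos hα0]
                nlinarith [abs_nonneg t, abs_nonneg (Real.sin t), abs_nonneg (Real.cos t)]
        have hpow : |t| ^ (α - 1) * |t| = |t| ^ α := by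
          rw [← Real.rpow_add_one (abs_ne_zero.2 ht)]; congr 1; ring
        calc ‖g t‖ = |t| ^ (α - 1) * |α * Real.sin t + t * Real.cos t| := by
              rw [hg_def]; simp [abs_mul, abs_of_nonneg h2]
          _ ≤ |t| ^ (α - 1) * ((α + 1) * |t|) := by gcongr
          _ = (α + 1) * |t| ^ α := by rw [← hpow]; ring
    · apply ContinuousAt.mul
      · exact (Real.continuousAt_rpow_const _ _ (Or.inl (abs_ne_zero.2 hx))).comp
          continuous_abs.continuousAt
      · fun_prop
  have hC1 : ContDiff ℝ 1 y :=
    contDiff_one_iff_deriv.2 ⟨fun x => (key x).differentiableAt, hderiv ▸ hgcont⟩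
  refine ⟨hC1, hy0, ?_, ?_, ?_⟩
  · rw [hderiv]; simp [hg_def]
  · -- the ODE
    intro x hx
    rw [hderiv]
    rcases lt_or_gt_of_ne hx with hxneg | hxpos
    · -- x < 0
      have hne : (-x : ℝ) ≠ 0 := neg_ne_zero.2 hxneg.ne
      have h1 : HasDerivAt (fun t : ℝ => (-t) ^ (α - 1)) ((-1) * (α - 1) * (-x) ^ (α - 1 - 1)) x :=
        (hasDerivAt_neg x).rpow_const (Or.inl hne)
      have h2 : HasDerivAt (fun t : ℝ => α * Real.sin t + t * Real.cos t)
          (α * Real.cos x + (1 * Real.cos x + x * (-Real.sin x))) x :=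
        ((Real.hasDerivAt_sin x).const_mul α).add ((hasDerivAt_id x).mul (Real.hasDerivAt_cos x))
      have h3 := h1.mul h2
      have heq : g =ᶠ[𝓝 x] fun t => (-t) ^ (α - 1) * (α * Real.sin t + t * Real.cos t) := by
        filter_upwards [Iio_mem_nhds hxneg] with t ht
        simp only [hg_def, abs_of_neg (Set.mem_Iio.mp ht)]
      have h4 := h3.congr_of_eventuallyEq heq
      rw [h4.deriv, hy x, hg_def]
      have e1 : (-x : ℝ) ^ (α - 1 - 1) = (-x) ^ (α - 2) := by congr 1; ring
      have e2 : (-x : ℝ) ^ (α - 1) = (-x) ^ (α - 2) * (-x) := by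
        rw [← Real.rpow_add_one hne]; congr 1; ring
      have e3 : (-x : ℝ) ^ α = (-x) ^ (α - 2) * x ^ 2 := by
        rw [show (x : ℝ) ^ 2 = (-x) * (-x) by ring, ← mul_assoc, ← Real.rpow_add_one hne,
          ← Real.rpow_add_one hne]
        congr 1; ring
      simp only [abs_of_neg hxneg, Real.sin_neg]
      rw [e1, e2, e3]
      field_simp
      ring
    · -- x > 0
      have hne : (x : ℝ) ≠ 0 := hxpos.ne'
      have h1 : HasDerivAt (fun t : ℝ => t ^ (α - 1)) ((α - 1) * x ^ (α - 1 - 1)) x :=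
        Real.hasDerivAt_rpow_const (Or.inl hne)
      have h2 : HasDerivAt (fun t : ℝ => α * Real.sin t + t * Real.cos t)
          (α * Real.cos x + (1 * Real.cos x + x * (-Real.sin x))) x :=
        ((Real.hasDerivAt_sin x).const_mul α).add ((hasDerivAt_id x).mul (Real.hasDerivAt_cos x))
      have h3 := h1.mul h2
      have heq : g =ᶠ[𝓝 x] fun t => t ^ (α - 1) * (α * Real.sin t + t * Real.cos t) := by
        filter_upwards [Ioi_mem_nhds hxpos] with t ht
        simp only [hg_def, abs_of_pos (Set.mem_Ioi.mp ht)]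
      have h4 := h3.congr_of_eventuallyEq heq
      rw [h4.deriv, hy x, hg_def]
      have e1 : (x : ℝ) ^ (α - 1 - 1) = x ^ (α - 2) := by congr 1; ring
      have e2 : (x : ℝ) ^ (α - 1) = x ^ (α - 2) * x := by
        rw [← Real.rpow_add_one hne]; congr 1; ring
      have e3 : (x : ℝ) ^ α = x ^ (α - 2) * x ^ 2 := by
        rw [sq, ← mul_assoc, ← Real.rpow_add_one hne, ← Real.rpow_add_one hne]; congr 1; ring
      simp only [abs_of_pos hxpos]
      rw [e1, e2, e3]
      field_simp
      ring
  · -- not identically zero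
    intro δ hδ
    have h0 : (0 : ℝ) < min δ 1 := lt_min hδ one_pos
    refine ⟨min δ 1, ⟨by linarith [h0], min_le_left _ _⟩, ?_⟩
    rw [hy, abs_of_pos h0]
    have hπ : min δ 1 < Real.pi := lt_of_le_of_lt (min_le_right _ _)
      (by linarith [Real.pi_gt_three])
    have hs : 0 < Real.sin (min δ 1) := Real.sin_pos_of_pos_of_lt_pi h0 hπ
    have hp : 0 < (min δ 1) ^ α := Real.rpow_pos_of_pos h0 α
    positivity
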